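/- Let A = A₁ ⟨α⟩ A₀ B where B is either empty or starts with ⟨α⟩, and A₁, A₀ are worms with all modalities > α. If GLP_Λ proves A₁ → ⟨α+1⟩A₀, then GLP_Λ proves A ↔ A₁B. -/

import Mathlib

inductive Formula (L : Type) : Type where
  | bot : Formula L
  | var : Nat → Formula L
  | imp : Formula L → Formula L → Formula L
  | box : L → Formula L → Formula L

namespace Formula

variable {L : Type}

def neg (φ : Formula L) : Formula L := imp φ bot
def top : Formula L := neg bot
def and (φ ψ : Formula L) : Formula L := neg (imp φ ψ.neg)
def or (φ ψ : Formula L) : Formula L := imp φ.neg ψ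
def iff (φ ψ : Formula L) : Formula L := (imp φ ψ).and (imp ψ φ)
def dia (α : L) (φ : Formula L) : Formula L := neg (box α φ.neg)

end Formula

open Formula

/-- Provability in the polymodal provability logic `GLP_Λ` over a linear order. -/
inductive GLP {L : Type} [LinearOrder L] : Formula L → Prop where
  | k1 : ∀ φ ψ : Formula L, GLP (φ.imp (ψ.imp φ))
  | k2 : ∀ φ ψ χ : Formula L, GLP ((φ.imp (ψ.imp χ)).imp ((φ.imp ψ).imp (φ.imp χ)))
  | k3 : ∀ φ ψ : Formula L, GLP ((φ.neg.imp ψ.neg).imp (ψ.imp φ))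
  | dist : ∀ (α : L) (φ ψ : Formula L), GLP ((Formula.box α (φ.imp ψ)).imp ((Formula.box α φ).imp (Formula.box α ψ)))
  | lob : ∀ (α : L) (φ : Formula L), GLP ((Formula.box α ((Formula.box α φ).imp φ)).imp (Formula.box α φ))
  | trans : ∀ (α β : L) (φ : Formula L), α ≤ β → GLP ((Formula.box α φ).imp (Formula.box β (Formula.box α φ)))
  | negintro : ∀ (α β : L) (φ : Formula L), α < β → GLP ((dia α φ).imp (Formula.box β (dia α φ)))
  | mono : ∀ (α β : L) (φ : Formula L), α ≤ β → GLP ((Formula.box α φ).imp (Formula.box β φ))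
  | mp : ∀ φ ψ : Formula L, GLP (φ.imp ψ) → GLP φ → GLP ψ
  | nec : ∀ (α : L) (φ : Formula L), GLP φ → GLP (Formula.box α φ)

/-- The worm (iterated consistency statement) associated to a list of modalities. -/
def worm {L : Type} : List L → Formula L
  | [] => Formula.top
  | α :: w => Formula.dia α (worm w)

/-- `Lt α A B` iff `GLP ⊢ B → ⟨α⟩A`. -/
def Lt {L : Type} [LinearOrder L] (α : L) (A B : List L) : Prop :=
  GLP ((worm B).imp (Formula.dia α (worm A)))

def Le {L : Type} [LinearOrder L] (α : L) (A B : List L) : Prop :=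
  Lt α A B ∨ A = B

section Aux

variable {L : Type} [LinearOrder L]

lemma GLP.mp' {φ ψ : Formula L} (h1 : GLP (φ.imp ψ)) (h2 : GLP φ) : GLP ψ :=
  GLP.mp φ ψ h1 h2

lemma glp_id (φ : Formula L) : GLP (φ.imp φ) :=
  ((GLP.k2 φ (φ.imp φ) φ).mp' (GLP.k1 φ (φ.imp φ))).mp' (GLP.k1 φ φ)

lemma comp_left {ψ χ : Formula L} (h : GLP (ψ.imp χ)) (φ : Formula L) :
    GLP ((φ.imp ψ).imp (φ.imp χ)) :=
  (GLP.k2 φ ψ χ).mp' ((GLP.k1 (ψ.imp χ) φ).mp' h)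

lemma imp_trans' {φ ψ χ : Formula L} (h1 : GLP (φ.imp ψ)) (h2 : GLP (ψ.imp χ)) :
    GLP (φ.imp χ) := (comp_left h2 φ).mp' h1

lemma perm {A B C : Formula L} (h : GLP (A.imp (B.imp C))) : GLP (B.imp (A.imp C)) :=
  imp_trans' (GLP.k1 B A) ((GLP.k2 A B C).mp' h)

lemma comp_thm (A B C : Formula L) : GLP ((A.imp B).imp ((B.imp C).imp (A.imp C))) :=
  perm (imp_trans' (GLP.k1 (B.imp C) A) (GLP.k2 A B C))

lemma comp_right {A B : Formula L} (h : GLP (A.imp B)) (C : Formula L) :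
    GLP ((B.imp C).imp (A.imp C)) := (comp_thm A B C).mp' h

lemma perm_thm (A B C : Formula L) : GLP ((A.imp (B.imp C)).imp (B.imp (A.imp C))) :=
  imp_trans' (GLP.k2 A B C) (comp_right (GLP.k1 B A) (A.imp C))

lemma glp_top : GLP (Formula.top (L := L)) := glp_id Formula.bot

lemma imp_top (φ : Formula L) : GLP (φ.imp Formula.top) :=
  (GLP.k1 Formula.top φ).mp' glp_top

lemma exfalso_thm (φ : Formula L) : GLP ((Formula.bot (L := L)).imp φ) :=
  (GLP.k3 φ Formula.bot).mp' (imp_top φ.neg)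

lemma dni (φ : Formula L) : GLP (φ.imp φ.neg.neg) := perm (glp_id φ.neg)

lemma dne (φ : Formula L) : GLP (φ.neg.neg.imp φ) :=
  (GLP.k3 φ φ.neg.neg).mp' (dni φ.neg)

lemma mtr {φ ψ : Formula L} (h : GLP (φ.imp ψ)) : GLP (ψ.neg.imp φ.neg) :=
  perm (imp_trans' h (dni ψ))

lemma contrapose_thm (A B : Formula L) : GLP ((A.imp B).imp (B.neg.imp A.neg)) :=
  comp_thm A B Formula.bot

lemma and_left (φ ψ : Formula L) : GLP ((φ.and ψ).imp φ) := by
  have h1 : GLP (φ.neg.imp (φ.imp ψ.neg)) := comp_left (exfalso_thm ψ.neg) φ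
  exact imp_trans' (mtr h1) (dne φ)

lemma and_right (φ ψ : Formula L) : GLP ((φ.and ψ).imp ψ) :=
  imp_trans' (mtr (GLP.k1 ψ.neg φ)) (dne ψ)

lemma and_intro_thm (φ ψ : Formula L) : GLP (φ.imp (ψ.imp (φ.and ψ))) :=
  (comp_left (perm_thm (φ.imp ψ.neg) ψ Formula.bot) φ).mp' (perm (glp_id (φ.imp ψ.neg)))

lemma and_intro {φ ψ : Formula L} (h1 : GLP φ) (h2 : GLP ψ) : GLP (φ.and ψ) :=
  ((and_intro_thm φ ψ).mp' h1).mp' h2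

lemma imp_mp2 {X A B : Formula L} (h1 : GLP (X.imp (A.imp B))) (h2 : GLP (X.imp A)) :
    GLP (X.imp B) := ((GLP.k2 X A B).mp' h1).mp' h2

lemma and_intro_imp {χ φ ψ : Formula L} (h1 : GLP (χ.imp φ)) (h2 : GLP (χ.imp ψ)) :
    GLP (χ.imp (φ.and ψ)) :=
  imp_mp2 (imp_trans' h1 (and_intro_thm φ ψ)) h2

lemma conj_imp {φ ψ χ : Formula L} (h : GLP (φ.imp (ψ.imp χ))) : GLP ((φ.and ψ).imp χ) :=
  imp_mp2 (imp_trans' (and_left φ ψ) h) (and_right φ ψ)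

lemma iff_intro {φ ψ : Formula L} (h1 : GLP (φ.imp ψ)) (h2 : GLP (ψ.imp φ)) :
    GLP (φ.iff ψ) := and_intro h1 h2

lemma box_mono {φ ψ : Formula L} (h : GLP (φ.imp ψ)) (β : L) :
    GLP ((Formula.box β φ).imp (Formula.box β ψ)) :=
  (GLP.dist β φ ψ).mp' (GLP.nec β _ h)

lemma dia_mono {φ ψ : Formula L} (h : GLP (φ.imp ψ)) (β : L) :
    GLP ((dia β φ).imp (dia β ψ)) := mtr (box_mono (mtr h) β)

lemma dia_level {α β : L} (hle : α ≤ β) (φ : Formula L) :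
    GLP ((dia β φ).imp (dia α φ)) := mtr (GLP.mono α β φ.neg hle)

lemma dia_dia (α : L) (φ : Formula L) : GLP ((dia α (dia α φ)).imp (dia α φ)) := by
  have h1 : GLP ((Formula.box α φ.neg).imp (Formula.box α (Formula.box α φ.neg).neg.neg)) :=
    imp_trans' (GLP.trans α α φ.neg le_rfl) (box_mono (dni (Formula.box α φ.neg)) α)
  exact mtr h1

lemma imp_neg_swap (ψ θ : Formula L) : GLP ((ψ.imp θ.neg).imp (θ.imp ψ.neg)) :=
  imp_trans' (GLP.k2 ψ θ Formula.bot) (comp_right (GLP.k1 θ ψ) ψ.neg)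

lemma dia_box_and (β : L) (ψ θ : Formula L) :
    GLP ((Formula.box β θ).imp ((dia β ψ).imp (dia β (ψ.and θ)))) := by
  have a : GLP ((ψ.and θ).neg.imp (θ.imp ψ.neg)) :=
    imp_trans' (dne (ψ.imp θ.neg)) (imp_neg_swap ψ θ)
  have c := imp_trans' (box_mono a β) (GLP.dist β θ ψ.neg)
  exact imp_trans' (perm c) (contrapose_thm _ _)

lemma glp_explosion {γ : L} {φ : Formula L} (h : GLP (dia γ φ)) (ψ : Formula L) : GLP ψ := by
  have h1 : GLP ((Formula.box γ (Formula.bot (L := L))).imp Formula.bot) :=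
    imp_trans' (box_mono (exfalso_thm φ.neg) γ) h
  have h2 : GLP (Formula.box γ (Formula.bot (L := L))) :=
    (GLP.lob γ Formula.bot).mp' (GLP.nec γ _ h1)
  exact (exfalso_thm ψ).mp' (h1.mp' h2)

end Aux

def diaList {L : Type} : List L → Formula L → Formula L
  | [], φ => φ
  | β :: w, φ => Formula.dia β (diaList w φ)

lemma worm_cons {L : Type} (α : L) (w : List L) : worm (α :: w) = Formula.dia α (worm w) := rfl

lemma worm_eq_diaList {L : Type} (w : List L) : worm w = diaList w Formula.top := by
  induction w with
  | nil => rfl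
  | cons β w ih => simp [worm, diaList, ih]

lemma worm_append {L : Type} (u v : List L) : worm (u ++ v) = diaList u (worm v) := by
  induction u with
  | nil => rfl
  | cons β u ih => simp [worm, diaList, ih]

section worms

variable {L : Type} [LinearOrder L]

lemma diaList_mono {φ ψ : Formula L} (h : GLP (φ.imp ψ)) (w : List L) :
    GLP ((diaList w φ).imp (diaList w ψ)) := by
  induction w with
  | nil => exact h
  | cons β w ih => exact dia_mono ih β

lemma diaList_pull {α : L} {w : List L} (hw : ∀ β ∈ w, α ≤ β) (χ : Formula L) :
    GLP ((diaList w (Formula.dia α χ)).imp (Formula.dia α χ)) := by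
  induction w with
  | nil => exact glp_id _
  | cons β w ih =>
    have h1 := dia_mono (ih (fun γ hγ => hw γ (List.mem_cons_of_mem _ hγ))) β
    have h2 := dia_level (hw β List.mem_cons_self) (Formula.dia α χ)
    exact imp_trans' h1 (imp_trans' h2 (dia_dia α χ))

lemma diaList_push {α : L} {w : List L} (hw : ∀ β ∈ w, α < β) (φ χ : Formula L) :
    GLP ((Formula.dia α χ).imp ((diaList w φ).imp (diaList w (φ.and (Formula.dia α χ))))) := by
  induction w with
  | nil => exact perm (and_intro_thm φ (Formula.dia α χ))
  | cons β w ih =>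
    have ihw := ih (fun γ hγ => hw γ (List.mem_cons_of_mem _ hγ))
    have h1 : GLP (((diaList w φ).and (Formula.dia α χ)).imp
        (diaList w (φ.and (Formula.dia α χ)))) := conj_imp (perm ihw)
    have h2 := dia_mono h1 β
    have h3 := GLP.negintro α β χ (hw β List.mem_cons_self)
    have h5 := imp_trans' h3 (dia_box_and β (diaList w φ) (Formula.dia α χ))
    exact imp_trans' h5 (comp_left h2 _)

lemma diaList_dia_fwd {α : L} {w : List L} (hw : ∀ β ∈ w, α < β) (χ : Formula L) :
    GLP ((diaList w (Formula.dia α χ)).imp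
      ((diaList w Formula.top).and (Formula.dia α χ))) :=
  and_intro_imp (diaList_mono (imp_top _) w)
    (diaList_pull (fun β hβ => (hw β hβ).le) χ)

lemma diaList_dia_bwd {α : L} {w : List L} (hw : ∀ β ∈ w, α < β) (χ : Formula L) :
    GLP (((diaList w Formula.top).and (Formula.dia α χ)).imp
      (diaList w (Formula.dia α χ))) := by
  have h1 := conj_imp (perm (diaList_push hw Formula.top χ))
  exact imp_trans' h1 (diaList_mono (and_right Formula.top (Formula.dia α χ)) w)

end worms

lemma diaList_nil {L : Type} (φ : Formula L) : diaList [] φ = φ := rfl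
lemma diaList_cons {L : Type} (β : L) (w : List L) (φ : Formula L) :
    diaList (β :: w) φ = Formula.dia β (diaList w φ) := rfl
lemma diaList_append {L : Type} (u v : List L) (φ : Formula L) :
    diaList (u ++ v) φ = diaList u (diaList v φ) := by
  induction u with
  | nil => rfl
  | cons β u ih => simp [diaList, ih]

/-- Let `A = A₁ ⟨α⟩ A₀ B` with `B` empty or starting with `⟨α⟩`, and
`A₁, A₀ ∈ 𝕎_{α+1}`.  If `GLP ⊢ A₁ → ⟨α+1⟩A₀` then `GLP ⊢ A ↔ A₁B`. -/
theorem getting_rid_of_small_terms {L : Type} [LinearOrder L] [SuccOrder L]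
    (α : L) (A₁ A₀ B : List L)
    (hB : B = [] ∨ ∃ B', B = α :: B')
    (hA₁ : ∀ β ∈ A₁, α < β) (hA₀ : ∀ β ∈ A₀, α < β)
    (h : GLP ((worm A₁).imp (Formula.dia (Order.succ α) (worm A₀)))) :
    GLP ((worm (A₁ ++ α :: A₀ ++ B)).iff (worm (A₁ ++ B))) := by
  rw [worm_eq_diaList A₁, worm_eq_diaList A₀] at h
  rcases hB with rfl | ⟨B', rfl⟩
  · -- B = []
    simp only [List.append_nil, worm_eq_diaList, diaList_append, diaList_cons]
    apply iff_intro
    · exact diaList_mono (imp_top _) A₁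
    · exact imp_trans'
        (and_intro_imp (glp_id _) (imp_trans' h (dia_level (Order.le_succ α) _)))
        (diaList_dia_bwd hA₁ (diaList A₀ Formula.top))
  · by_cases hmax : IsMax α
    · have hA1nil : A₁ = [] := by
        cases A₁ with
        | nil => rfl
        | cons β w => exact absurd (hA₁ β List.mem_cons_self) hmax.not_lt
      subst hA1nil
      have htop : GLP (Formula.dia (Order.succ α) (diaList A₀ Formula.top)) :=
        h.mp' glp_top
      exact glp_explosion htop _
    · have hsucc : α < Order.succ α := Order.lt_succ_of_not_isMax hmax
      simp only [worm_eq_diaList, diaList_append, diaList_cons]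
      set C := diaList B' (Formula.top (L := L)) with hC
      set Q := diaList A₀ (Formula.top (L := L)) with hQ
      set P := diaList A₁ (Formula.top (L := L)) with hP
      apply iff_intro
      · have hpull : GLP ((diaList A₀ (Formula.dia α C)).imp (Formula.dia α C)) :=
          diaList_pull (fun β hβ => (hA₀ β hβ).le) _
        exact diaList_mono (imp_trans' (dia_mono hpull α) (dia_dia α _)) A₁
      · have e1 := diaList_dia_fwd hA₁ C
        have s1 : GLP ((P.and (Formula.dia α C)).imp
            (Formula.dia (Order.succ α) Q)) := imp_trans' (and_left _ _) h
        have s2 : GLP ((P.and (Formula.dia α C)).imp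
            (Formula.box (Order.succ α) (Formula.dia α C))) :=
          imp_trans' (and_right _ _) (GLP.negintro α (Order.succ α) C hsucc)
        have s3 := imp_trans' s2 (dia_box_and (Order.succ α) Q (Formula.dia α C))
        have s4 := imp_mp2 s3 s1
        have s5 := imp_trans' s4 (dia_level (Order.le_succ α) (Q.and (Formula.dia α C)))
        have s6 := and_intro_imp (and_left P (Formula.dia α C)) s5
        have s7 := imp_trans' s6 (diaList_dia_bwd hA₁ (Q.and (Formula.dia α C)))
        have s8 := diaList_mono (dia_mono (diaList_dia_bwd hA₀ C) α) A₁
        exact imp_trans' e1 (imp_trans' s7 s8)
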